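/- Let A ∈ S^n be a symmetric nonnegative matrix with A_ii > 0 for all i. Then τ_cp(A) equals the optimal value of the generalized moment problem inf{μ(ℝⁿ) : μ a finite positive Borel measure on ℝⁿ, ∫ x_i x_j dμ = A_ij for all i,j ∈ [n], Supp(μ) ⊆ K_A} (both sides being +∞ exactly when A is not completely positive). -/

import Mathlib

open Matrix MeasureTheory
open scoped ENNReal

lemma aux_sum_extend_emb {ι κ M : Type*} [Fintype ι] [Fintype κ] [AddCommMonoid M]
    (e : ι ↪ κ) (f : κ → M) (g : ι → M) (hfg : ∀ i, f (e i) = g i)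
    (hz : ∀ j, (¬ ∃ i, e i = j) → f j = 0) : ∑ j, f j = ∑ i, g i := by
  classical
  calc ∑ j, f j = ∑ j ∈ Finset.univ.map e, f j :=
        (Finset.sum_subset (Finset.subset_univ _) fun j _ hj =>
          hz j (by simpa [Finset.mem_map] using hj)).symm
    _ = ∑ i, f (e i) := Finset.sum_map _ e f
    _ = ∑ i, g i := Finset.sum_congr rfl fun i _ => hfg i

lemma aux_isCompact_convexHull {E : Type*} [NormedAddCommGroup E] [NormedSpace ℝ E]
    [FiniteDimensional ℝ E] {s : Set E} (hs : IsCompact s) :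
    IsCompact (convexHull ℝ s) := by
  rcases s.eq_empty_or_nonempty with rfl | ⟨x₀, hx₀⟩
  · simp
  set d := Module.finrank ℝ E + 1 with hd
  have key : convexHull ℝ s =
      (fun p : (Fin d → ℝ) × (Fin d → E) => ∑ i, p.1 i • p.2 i) ''
        (stdSimplex ℝ (Fin d) ×ˢ Set.univ.pi fun _ => s) := by
    apply Set.Subset.antisymm
    · intro x hx
      obtain ⟨ι, hι, z, w, hzs, hai, hwpos, hw1, hsum⟩ :=
        eq_pos_convex_span_of_mem_convexHull hx
      have hcard : Fintype.card ι ≤ d := by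
        calc Fintype.card ι ≤ Module.finrank ℝ (vectorSpan ℝ (Set.range z)) + 1 :=
              hai.card_le_finrank_succ
          _ ≤ d := by
              have := Submodule.finrank_le (vectorSpan ℝ (Set.range z))
              omega
      obtain ⟨e⟩ : Nonempty (ι ↪ Fin d) := by
        rw [Function.Embedding.nonempty_iff_card_le, Fintype.card_fin]
        exact hcard
      classical
      set w' : Fin d → ℝ := Function.extend e w 0 with hw'
      set z' : Fin d → E := Function.extend e z (fun _ => x₀) with hz'
      have hextw : ∀ i, w' (e i) = w i := fun i => e.injective.extend_apply _ _ _
      have hextz : ∀ i, z' (e i) = z i := fun i => e.injective.extend_apply _ _ _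
      have hw0 : ∀ j, (¬ ∃ i, e i = j) → w' j = 0 := by
        intro j h; rw [hw', Function.extend_apply' _ _ _ h]; rfl
      refine ⟨(w', z'), ⟨⟨?_, ?_⟩, ?_⟩, ?_⟩
      · intro j
        show 0 ≤ w' j
        by_cases h : ∃ i, e i = j
        · obtain ⟨i, rfl⟩ := h; rw [hextw]; exact (hwpos i).le
        · rw [hw0 j h]
      · exact (aux_sum_extend_emb e w' w hextw hw0).trans hw1
      · intro j _
        show z' j ∈ s
        by_cases h : ∃ i, e i = j
        · obtain ⟨i, rfl⟩ := h; rw [hextz]; exact hzs (Set.mem_range_self i)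
        · rw [hz', Function.extend_apply' _ _ _ h]; exact hx₀
      · refine (aux_sum_extend_emb e (fun j => w' j • z' j) (fun i => w i • z i)
          (fun i => by simp only [hextw, hextz])
          (fun j h => by simp only [hw0 j h, zero_smul])).trans hsum
    · rintro _ ⟨⟨w, z⟩, ⟨⟨hw0, hw1⟩, hz⟩, rfl⟩
      exact (convex_convexHull ℝ s).sum_mem (fun i _ => hw0 i) hw1
        (fun i _ => subset_convexHull ℝ s (hz i (Set.mem_univ i)))
  rw [key]
  refine ((IsCompact.prod (isCompact_stdSimplex (𝕜 := ℝ) (ι := Fin d)) (isCompact_univ_pi fun _ => hs)).image ?_)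
  exact continuous_finset_sum _ fun i _ =>
    ((continuous_apply i).comp continuous_fst).smul ((continuous_apply i).comp continuous_snd)

/-- For a symmetric nonnegative matrix `A` with positive diagonal, the
parameter `τ_cp(A)` equals the optimal value of the generalized moment problem
`inf {μ(ℝⁿ) : ∫ xᵢxⱼ dμ = Aᵢⱼ (i,j ∈ [n]), Supp(μ) ⊆ K_A}` (both computed in `ℝ≥0∞`,
so both sides are `+∞` exactly when `A` is not completely positive). -/
theorem tau_cp_eq_gmp_value
    (n : ℕ) (A : Matrix (Fin n) (Fin n) ℝ) (hsymm : A.IsSymm)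
    (hnn : ∀ i j, 0 ≤ A i j) (hdiag : ∀ i, 0 < A i i)
    (K : Set (Fin n → ℝ))
    (hK : K = {x | (∀ i, 0 ≤ Real.sqrt (A i i) * x i - (x i) ^ 2) ∧
        (∀ i j : Fin n, i ≠ j → A i j ≠ 0 → 0 ≤ A i j - x i * x j) ∧
        (∀ i j : Fin n, i ≠ j → A i j = 0 → x i * x j = 0) ∧
        (A - vecMulVec x x).PosSemidef}) :
    sInf {v : ℝ≥0∞ | ∃ lam : ℝ, 0 < lam ∧
        lam⁻¹ • A ∈ convexHull ℝ {B : Matrix (Fin n) (Fin n) ℝ |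
          ∃ x : Fin n → ℝ, (∀ i, 0 ≤ x i) ∧ (A - vecMulVec x x).PosSemidef ∧
            (∀ i j, x i * x j ≤ A i j) ∧ B = vecMulVec x x} ∧
        v = ENNReal.ofReal lam}
    = sInf {v : ℝ≥0∞ | ∃ μ : Measure (Fin n → ℝ), IsFiniteMeasure μ ∧
        μ Kᶜ = 0 ∧
        (∀ i j : Fin n, Integrable (fun x => x i * x j) μ) ∧
        (∀ i j : Fin n, ∫ x, x i * x j ∂μ = A i j) ∧
        v = μ Set.univ} := by
  classical
  set S : Set (Fin n → ℝ) := {x | (∀ i, 0 ≤ x i) ∧ (A - vecMulVec x x).PosSemidef ∧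
      ∀ i j, x i * x j ≤ A i j} with hSdef
  -- K = S
  have hKS : K = S := by
    rw [hK]
    ext x
    constructor
    · rintro ⟨h1, h2, h3, h4⟩
      have hx0 : ∀ i, 0 ≤ x i := by
        intro i
        nlinarith [h1 i, Real.sqrt_nonneg (A i i), sq_nonneg (x i)]
      have hxle : ∀ i, x i ≤ Real.sqrt (A i i) := by
        intro i
        nlinarith [h1 i, hx0 i, Real.sqrt_nonneg (A i i)]
      refine ⟨hx0, h4, ?_⟩
      intro i j
      by_cases hij : i = j
      · subst hij
        calc x i * x i ≤ Real.sqrt (A i i) * Real.sqrt (A i i) :=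
              mul_le_mul (hxle i) (hxle i) (hx0 i) (Real.sqrt_nonneg _)
          _ = A i i := Real.mul_self_sqrt (hdiag i).le
      · by_cases hA : A i j = 0
        · rw [h3 i j hij hA, hA]
        · linarith [h2 i j hij hA]
    · rintro ⟨hx0, hpsd, hprod⟩
      have hxle : ∀ i, x i ≤ Real.sqrt (A i i) := by
        intro i
        rw [Real.le_sqrt (hx0 i) (hdiag i).le, sq]
        exact hprod i i
      refine ⟨?_, ?_, ?_, hpsd⟩
      · intro i
        nlinarith [hx0 i, hxle i]
      · intro i j _ _
        linarith [hprod i j]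
      · intro i j _ hA
        have h1 : x i * x j ≤ 0 := hA ▸ hprod i j
        have h2 : 0 ≤ x i * x j := mul_nonneg (hx0 i) (hx0 j)
        linarith
  -- S is compact
  have hScl : IsClosed S := by
    have herm : ∀ x : Fin n → ℝ, (A - vecMulVec x x).IsHermitian := by
      intro x
      show (A - vecMulVec x x)ᴴ = A - vecMulVec x x
      ext i j
      simp only [conjTranspose_apply, Matrix.sub_apply, vecMulVec_apply, star_trivial,
        RCLike.star_def]
      rw [hsymm.apply j i]
      ring
    have hSeq : S = ({x : Fin n → ℝ | ∀ i, 0 ≤ x i} ∩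
        ((⋂ y : Fin n → ℝ, {x : Fin n → ℝ | 0 ≤ star y ⬝ᵥ ((A - vecMulVec x x) *ᵥ y)}) ∩
          ⋂ i, ⋂ j, {x : Fin n → ℝ | x i * x j ≤ A i j})) := by
      ext x
      simp only [hSdef, Set.mem_setOf_eq, Set.mem_inter_iff, Set.mem_iInter]
      constructor
      · rintro ⟨a, b, c⟩
        exact ⟨a, ⟨fun y => b.dotProduct_mulVec_nonneg y, fun i j => c i j⟩⟩
      · rintro ⟨a, b, c⟩
        exact ⟨a, Matrix.PosSemidef.of_dotProduct_mulVec_nonneg (herm x) fun y => b y, fun i j => c i j⟩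
    rw [hSeq]
    refine IsClosed.inter ?_ (IsClosed.inter ?_ ?_)
    · have : {x : Fin n → ℝ | ∀ i, 0 ≤ x i} = ⋂ i, {x : Fin n → ℝ | 0 ≤ x i} := by
        ext x; simp [Set.mem_iInter]
      rw [this]
      exact isClosed_iInter fun i => isClosed_le continuous_const (continuous_apply i)
    · refine isClosed_iInter fun y => isClosed_le continuous_const ?_
      show Continuous fun x : Fin n → ℝ => ∑ i, star y i * ∑ j, (A i j - x i * x j) * y j
      refine continuous_finset_sum _ fun i _ => Continuous.mul continuous_const ?_
      exact continuous_finset_sum _ fun j _ =>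
        ((continuous_const.sub ((continuous_apply i).mul (continuous_apply j))).mul
          continuous_const)
    · exact isClosed_iInter fun i => isClosed_iInter fun j =>
        isClosed_le ((continuous_apply i).mul (continuous_apply j)) continuous_const
  have hSsub : S ⊆ Set.Icc (fun _ => (0:ℝ)) (fun i => Real.sqrt (A i i)) := by
    rintro x ⟨hx0, _, hprod⟩
    constructor
    · intro i; exact hx0 i
    · intro i
      rw [Real.le_sqrt (hx0 i) (hdiag i).le, sq]
      exact hprod i i
  have hScpt : IsCompact S := IsCompact.of_isClosed_subset isCompact_Icc hScl hSsub
  -- continuity of x ↦ vecMulVec x x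
  have hvmv : Continuous (fun x : Fin n → ℝ => vecMulVec x x) := by
    apply continuous_pi
    intro i
    apply continuous_pi
    intro j
    exact (continuous_apply i).mul (continuous_apply j)
  refine le_antisymm (le_sInf ?_) (le_sInf ?_)
  · -- τ_cp ≤ moment value
    rintro v ⟨μ, hfin, hμK, hint, hmom, rfl⟩
    by_cases hμz : μ Set.univ = 0
    · rw [hμz]
      rcases Nat.eq_zero_or_pos n with hn | hn
      · subst hn
        refine ENNReal.le_of_forall_pos_le_add fun ε hε _ => ?_
        rw [zero_add]
        refine sInf_le ⟨(ε : ℝ), by exact_mod_cast hε, ?_, (ENNReal.ofReal_coe_nnreal).symm⟩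
        refine subset_convexHull ℝ _ ⟨0, fun i => i.elim0, ⟨?_, ?_⟩, fun i => i.elim0, ?_⟩
        · ext i j
          exact i.elim0
        · intro y
          rw [Subsingleton.elim y 0]
          simp
        · ext i j
          exact i.elim0
      · exfalso
        have hμ0 : μ = 0 := by rwa [← Measure.measure_univ_eq_zero]
        have h := hmom ⟨0, hn⟩ ⟨0, hn⟩
        rw [hμ0, integral_zero_measure] at h
        exact (hdiag ⟨0, hn⟩).ne' h.symm
    · letI : NormedAddCommGroup (Matrix (Fin n) (Fin n) ℝ) :=
        inferInstanceAs (NormedAddCommGroup (Fin n → Fin n → ℝ))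
      letI : NormedSpace ℝ (Matrix (Fin n) (Fin n) ℝ) :=
        inferInstanceAs (NormedSpace ℝ (Fin n → Fin n → ℝ))
      haveI : FiniteDimensional ℝ (Matrix (Fin n) (Fin n) ℝ) :=
        inferInstanceAs (FiniteDimensional ℝ (Fin n → Fin n → ℝ))
      haveI hNZ : NeZero μ := ⟨by intro h; exact hμz (by simp [h])⟩
      set ν : Measure (Fin n → ℝ) := (μ Set.univ)⁻¹ • μ with hν
      haveI hprob : IsProbabilityMeasure ν := by rw [hν]; infer_instance
      set R : ℝ := ∑ k, Real.sqrt (A k k) with hR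
      have hR0 : 0 ≤ R := Finset.sum_nonneg fun k _ => Real.sqrt_nonneg _
      have hxleR : ∀ x ∈ S, ∀ k, x k ≤ R := by
        intro x hx k
        refine le_trans ((hSsub hx).2 k) ?_
        exact Finset.single_le_sum (fun k _ => Real.sqrt_nonneg (A k k))
          (Finset.mem_univ k)
      have hbound : ∀ x ∈ S, ‖vecMulVec x x‖ ≤ R * R := by
        intro x hx
        refine (pi_norm_le_iff_of_nonneg (mul_nonneg hR0 hR0)).mpr ?_
        intro i
        rw [pi_norm_le_iff_of_nonneg (mul_nonneg hR0 hR0)]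
        intro j
        show ‖vecMulVec x x i j‖ ≤ R * R
        rw [Matrix.vecMulVec_apply, Real.norm_eq_abs,
          abs_of_nonneg (mul_nonneg (hx.1 i) (hx.1 j))]
        exact mul_le_mul (hxleR x hx i) (hxleR x hx j) (hx.1 j) hR0
      have haeS : ∀ᵐ x ∂μ, x ∈ S := by
        rw [← hKS]
        rw [MeasureTheory.ae_iff]
        exact hμK
      have hIf : Integrable (fun x : Fin n → ℝ => vecMulVec x x) μ := by
        refine Integrable.mono' (integrable_const (R * R)) hvmv.aestronglyMeasurable ?_
        filter_upwards [haeS] with x hx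
        exact hbound x hx
      have hIfν : Integrable (fun x : Fin n → ℝ => vecMulVec x x) ν := by
        rw [hν]
        exact hIf.smul_measure (ENNReal.inv_ne_top.mpr hμz)
      have haeGν : ∀ᵐ x ∂ν, vecMulVec x x ∈ {B : Matrix (Fin n) (Fin n) ℝ |
          ∃ y : Fin n → ℝ, (∀ i, 0 ≤ y i) ∧ (A - vecMulVec y y).PosSemidef ∧
            (∀ i j, y i * y j ≤ A i j) ∧ B = vecMulVec y y} := by
        rw [hν]
        refine Measure.ae_smul_measure ?_ _
        filter_upwards [haeS] with x hx
        exact ⟨x, hx.1, hx.2.1, hx.2.2, rfl⟩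
      have hGcpt : IsCompact {B : Matrix (Fin n) (Fin n) ℝ |
          ∃ y : Fin n → ℝ, (∀ i, 0 ≤ y i) ∧ (A - vecMulVec y y).PosSemidef ∧
            (∀ i j, y i * y j ≤ A i j) ∧ B = vecMulVec y y} := by
        have him : {B : Matrix (Fin n) (Fin n) ℝ |
            ∃ y : Fin n → ℝ, (∀ i, 0 ≤ y i) ∧ (A - vecMulVec y y).PosSemidef ∧
              (∀ i j, y i * y j ≤ A i j) ∧ B = vecMulVec y y} =
            (fun x : Fin n → ℝ => vecMulVec x x) '' S := by
          ext B
          constructor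
          · rintro ⟨x, h1, h2, h3, rfl⟩
            exact ⟨x, ⟨h1, h2, h3⟩, rfl⟩
          · rintro ⟨x, ⟨h1, h2, h3⟩, rfl⟩
            exact ⟨x, h1, h2, h3, rfl⟩
        rw [him]
        exact hScpt.image hvmv
      have hmemν : (∫ x, vecMulVec x x ∂ν) ∈ convexHull ℝ
          {B : Matrix (Fin n) (Fin n) ℝ |
          ∃ y : Fin n → ℝ, (∀ i, 0 ≤ y i) ∧ (A - vecMulVec y y).PosSemidef ∧
            (∀ i j, y i * y j ≤ A i j) ∧ B = vecMulVec y y} :=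
        (convex_convexHull ℝ _).integral_mem
          (aux_isCompact_convexHull hGcpt).isClosed
          (haeGν.mono fun x hx => subset_convexHull ℝ _ hx) hIfν
      have hentry : ∀ a b : Fin n,
          (∫ x, vecMulVec x x ∂ν) a b = ((μ Set.univ)⁻¹).toReal * A a b := by
        intro a b
        set L : Matrix (Fin n) (Fin n) ℝ →L[ℝ] ℝ :=
          (ContinuousLinearMap.proj b).comp
            (ContinuousLinearMap.proj (R := ℝ) (φ := fun _ : Fin n => Fin n → ℝ) a)
          with hL
        have hcomm := L.integral_comp_comm hIfν
        have hLx : (fun x : Fin n → ℝ => L (vecMulVec x x)) =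
            fun x : Fin n → ℝ => x a * x b := rfl
        have hLi : L (∫ x, vecMulVec x x ∂ν) = (∫ x, vecMulVec x x ∂ν) a b := rfl
        rw [hLx] at hcomm
        rw [← hLi, ← hcomm, hν, integral_smul_measure, hmom a b, smul_eq_mul]
      refine sInf_le ⟨(μ Set.univ).toReal,
        ENNReal.toReal_pos hμz (measure_ne_top μ _), ?_,
        (ENNReal.ofReal_toReal (measure_ne_top μ _)).symm⟩
      have heq : ((μ Set.univ).toReal)⁻¹ • A = ∫ x, vecMulVec x x ∂ν := by
        ext a b
        rw [Matrix.smul_apply, hentry a b, smul_eq_mul, ENNReal.toReal_inv]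
      rw [heq]
      exact hmemν
  · -- moment value ≤ τ_cp
    rintro v ⟨lam, hlam, hmem, rfl⟩
    rw [convexHull_eq] at hmem
    obtain ⟨ι, t, w, z, hw0, hw1, hzG, hcm⟩ := hmem
    rw [Finset.centerMass_eq_of_sum_1 _ _ hw1] at hcm
    set xv : ι → (Fin n → ℝ) := fun i =>
      if h : i ∈ t then (hzG i h).choose else 0 with hxvdef
    have hxv : ∀ i ∈ t, (∀ k, 0 ≤ xv i k) ∧ ((A - vecMulVec (xv i) (xv i)).PosSemidef) ∧
        (∀ k l, xv i k * xv i l ≤ A k l) ∧ z i = vecMulVec (xv i) (xv i) := by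
      intro i hi
      have := (hzG i hi).choose_spec
      rw [hxvdef]
      simp only [dif_pos hi]
      exact this
    set μ : Measure (Fin n → ℝ) :=
      ∑ i ∈ t, (ENNReal.ofReal (lam * w i)) • Measure.dirac (xv i) with hμdef
    have hμuniv : μ Set.univ = ENNReal.ofReal lam := by
      rw [hμdef, Measure.finset_sum_apply]
      simp only [Measure.smul_apply, measure_univ, smul_eq_mul, mul_one]
      rw [← ENNReal.ofReal_sum_of_nonneg (fun i hi => mul_nonneg hlam.le (hw0 i hi)),
        ← Finset.mul_sum, hw1, mul_one]
    have hfinμ : IsFiniteMeasure μ := ⟨by rw [hμuniv]; exact ENNReal.ofReal_lt_top⟩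
    have hμK : μ Kᶜ = 0 := by
      rw [hμdef, Measure.finset_sum_apply]
      refine Finset.sum_eq_zero fun i hi => ?_
      rw [Measure.smul_apply, smul_eq_mul]
      have hxK : xv i ∈ K := by
        rw [hKS]
        exact ⟨(hxv i hi).1, (hxv i hi).2.1, (hxv i hi).2.2.1⟩
      have hd0 : Measure.dirac (xv i) Kᶜ = 0 := by
        refine measure_mono_null (Set.compl_subset_compl.mpr
          (Set.singleton_subset_iff.mpr hxK)) ?_
        rw [Measure.dirac_apply' _ (MeasurableSet.compl (measurableSet_singleton _))]
        simp
      rw [hd0, mul_zero]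
    have hintμ : ∀ i j : Fin n, Integrable (fun x : Fin n → ℝ => x i * x j) μ := by
      intro i j
      rw [hμdef, integrable_finset_sum_measure]
      intro k hk
      refine Integrable.smul_measure ?_ ENNReal.ofReal_ne_top
      exact (integrable_const _).congr (ae_eq_dirac fun x : Fin n → ℝ => x i * x j).symm
    have hmomμ : ∀ a b : Fin n, ∫ x, x a * x b ∂μ = A a b := by
      intro a b
      have hI : ∀ k ∈ t, Integrable (fun x : Fin n → ℝ => x a * x b)
          ((ENNReal.ofReal (lam * w k)) • Measure.dirac (xv k)) := by
        intro k hk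
        refine Integrable.smul_measure ?_ ENNReal.ofReal_ne_top
        exact (integrable_const _).congr (ae_eq_dirac fun x : Fin n → ℝ => x a * x b).symm
      rw [hμdef, integral_finset_sum_measure hI]
      have hterm : ∀ k ∈ t, ∫ x, x a * x b ∂((ENNReal.ofReal (lam * w k)) •
          Measure.dirac (xv k)) = lam * w k * (xv k a * xv k b) := by
        intro k hk
        rw [integral_smul_measure, integral_dirac,
          ENNReal.toReal_ofReal (mul_nonneg hlam.le (hw0 k hk)), smul_eq_mul]
      rw [Finset.sum_congr rfl hterm]
      have h2 : ∑ k ∈ t, w k * (xv k a * xv k b) = lam⁻¹ * A a b := by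
        calc ∑ k ∈ t, w k * (xv k a * xv k b) = (∑ i ∈ t, w i • z i) a b := by
              rw [Matrix.sum_apply]
              refine Finset.sum_congr rfl fun k hk => ?_
              rw [Matrix.smul_apply, (hxv k hk).2.2.2, Matrix.vecMulVec_apply, smul_eq_mul]
          _ = (lam⁻¹ • A) a b := by rw [hcm]
          _ = lam⁻¹ * A a b := by rw [Matrix.smul_apply, smul_eq_mul]
      calc ∑ k ∈ t, lam * w k * (xv k a * xv k b)
          = lam * ∑ k ∈ t, w k * (xv k a * xv k b) := by
            rw [Finset.mul_sum]
            exact Finset.sum_congr rfl fun k _ => by ring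
        _ = lam * (lam⁻¹ * A a b) := by rw [h2]
        _ = A a b := by
            rw [← mul_assoc, mul_inv_cancel₀ hlam.ne', one_mul]
    exact sInf_le ⟨μ, hfinμ, hμK, hintμ, hmomμ, hμuniv.symm⟩
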